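/- arXiv:1902.03140 — 3 statements merged into one kernel-verified Lean document; each statement's English description precedes it below -/
import Mathlib

section
/- If f is holomorphic on the open disc of radius 1/2 centered at 0, f(0) = 0, f'(z) = 1 + f(z)^2, and |f(z)| ≤ 2|z| on the disc, then |f(z) - z| ≤ 4|z|^3/3 for all z in the disc; consequently the only zero of f is z = 0. -/
/-- With the bound `|f z| ≤ 2|z|`, one has `|f z - z| ≤ 4|z|^3/3`; consequently
the only zero of `f` is `0`. -/
theorem stmt_4 (f : ℂ → ℂ) (h0 : f 0 = 0)
    (hf : ∀ z ∈ Metric.ball (0 : ℂ) (1/2), HasDerivAt f (1 + f z ^ 2) z)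
    (hb : ∀ z ∈ Metric.ball (0 : ℂ) (1/2), ‖f z‖ ≤ 2 * ‖z‖) :
    ∀ z ∈ Metric.ball (0 : ℂ) (1/2),
      ‖f z - z‖ ≤ 4 * ‖z‖ ^ 3 / 3 ∧ (f z = 0 → z = 0) := by
  intro z hz
  have hzlt : ‖z‖ < 1/2 := by
    simpa [Complex.dist_eq] using hz
  have hmem : ∀ t : ℝ, t ∈ Set.uIcc (0:ℝ) 1 → (t:ℂ) * z ∈ Metric.ball (0:ℂ) (1/2) := by
    intro t ht
    rw [Set.uIcc_of_le (by norm_num)] at ht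
    have : ‖(t:ℂ) * z‖ = |t| * ‖z‖ := by
      simp [map_mul]
    have habs : |t| ≤ 1 := abs_le.2 ⟨by linarith [ht.1], ht.2⟩
    have : ‖(t:ℂ) * z‖ ≤ ‖z‖ := by
      rw [this]
      calc |t| * ‖z‖ ≤ 1 * ‖z‖ := by
            exact mul_le_mul_of_nonneg_right habs (norm_nonneg z)
        _ = ‖z‖ := one_mul _
    simp only [Metric.mem_ball, dist_zero_right]
    linarith
  have hderiv : ∀ t ∈ Set.uIcc (0:ℝ) 1,
      HasDerivAt (fun t : ℝ => f ((t:ℂ) * z) - (t:ℂ) * z) (f ((t:ℂ)*z)^2 * z) t := by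
    intro t ht
    have h1 : HasDerivAt (fun w : ℂ => f (w * z) - w * z)
        ((1 + f ((t:ℂ)*z)^2) * z - z) (t:ℂ) := by
      have hm : HasDerivAt (fun w : ℂ => w * z) z (t:ℂ) := by
        simpa using (hasDerivAt_id ((t:ℂ))).mul_const z
      exact ((hf _ (hmem t ht)).comp (t:ℂ) hm).sub hm
    have h2 := h1.comp_ofReal
    convert h2 using 1
    ring
  have hcontf : ContinuousOn (fun t : ℝ => f ((t:ℂ)*z)^2 * z) (Set.uIcc 0 1) := by
    apply ContinuousOn.mul _ continuousOn_const
    apply ContinuousOn.pow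
    intro t ht
    have hc : Continuous fun t : ℝ => (t:ℂ) * z := by fun_prop
    have h3 : ContinuousAt (fun t : ℝ => f ((t:ℂ) * z)) t :=
      ContinuousAt.comp ((hf _ (hmem t ht)).differentiableAt.continuousAt) hc.continuousAt
    exact h3.continuousWithinAt
  have hint : f z - z = ∫ t in (0:ℝ)..1, f ((t:ℂ)*z)^2 * z := by
    have := intervalIntegral.integral_eq_sub_of_hasDerivAt hderiv
      (hcontf.intervalIntegrable)
    simp only [Complex.ofReal_one, Complex.ofReal_zero, one_mul, zero_mul, h0] at this
    rw [this]
    ring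
  have key : ‖f z - z‖ ≤ 4 * ‖z‖ ^ 3 / 3 := by
    have hbnd : ∀ t ∈ Set.uIoc (0:ℝ) 1,
        ‖f ((t:ℂ)*z)^2 * z‖ ≤ 4 * t^2 * ‖z‖ ^ 3 := by
      intro t ht
      rw [Set.uIoc_of_le (by norm_num)] at ht
      have h1 : ‖f ((t:ℂ)*z)‖ ≤ 2 * (t * ‖z‖) := by
        have htmem : t ∈ Set.uIcc (0:ℝ) 1 := by
          rw [Set.uIcc_of_le (by norm_num : (0:ℝ) ≤ 1)]
          exact ⟨le_of_lt ht.1, ht.2⟩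
        have := hb _ (hmem t htmem)
        rwa [norm_mul, Complex.norm_real, Real.norm_eq_abs, abs_of_pos ht.1] at this
      have : ‖f ((t:ℂ)*z)^2 * z‖ = ‖f ((t:ℂ)*z)‖^2 * ‖z‖ := by
        simp [map_mul, map_pow]
      rw [this]
      have h2 : ‖f ((t:ℂ)*z)‖^2 ≤ (2 * (t * ‖z‖))^2 :=
        pow_le_pow_left₀ (norm_nonneg _) h1 2
      calc ‖f ((t:ℂ)*z)‖^2 * ‖z‖
          ≤ (2 * (t * ‖z‖))^2 * ‖z‖ :=
            mul_le_mul_of_nonneg_right h2 (norm_nonneg z)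
        _ = 4 * t^2 * ‖z‖ ^ 3 := by ring
    have hgint : IntervalIntegrable (fun t : ℝ => 4 * t^2 * ‖z‖ ^ 3)
        MeasureTheory.volume 0 1 := by
      apply Continuous.intervalIntegrable; fun_prop
    have := intervalIntegral.norm_integral_le_of_norm_le
      zero_le_one
      (MeasureTheory.ae_of_all _ fun t ht => hbnd t (by rw [Set.uIoc_of_le zero_le_one]; exact ht)) hgint
    rw [hint]
    refine this.trans (le_of_eq ?_)
    have : ∫ t in (0:ℝ)..1, 4 * t^2 * ‖z‖ ^ 3
        = (4 * ‖z‖ ^ 3) * ∫ t in (0:ℝ)..1, t^2 := by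
      rw [← intervalIntegral.integral_const_mul]
      congr 1; ext t; ring
    rw [this, integral_pow]
    push_cast
    ring
  refine ⟨key, fun hfz => ?_⟩
  by_contra hne
  have hpos : 0 < ‖z‖ := norm_pos_iff.mpr hne
  rw [hfz, zero_sub, norm_neg] at key
  nlinarith [sq_nonneg (‖z‖)]
end

section
/- If f is holomorphic on the open disc of radius 1/2 about 0, satisfies f(0)=0, f' = 1 + f^2, and |f(z)| ≤ 2|z|, then for z = x + iy in the disc one has |Im f(z) - y| ≤ 4(x^2 + y^2)|y|; hence f(z) is real only if z is real. -/
open Complex Set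

set_option maxHeartbeats 1000000

private lemma im_hasDerivAt' {F : ℝ → ℂ} {d : ℂ} {t : ℝ} (h : HasDerivAt F d t) :
    HasDerivAt (fun s => (F s).im) d.im t := by
  have h2 := (Complex.imCLM.hasFDerivAt.comp t h.hasFDerivAt).hasDerivAt
  simp at h2
  exact h2

private lemma real_axis (f : ℂ → ℂ) (h0 : f 0 = 0)
    (hf : ∀ z ∈ Metric.ball (0 : ℂ) (1/2), HasDerivAt f (1 + f z ^ 2) z)
    (hb : ∀ z ∈ Metric.ball (0 : ℂ) (1/2), ‖f z‖ ≤ 2 * ‖z‖)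
    (x : ℝ) (hx : |x| < 1/2) : (f x).im = 0 := by
  set u : ℝ → ℝ := fun t => (f ((t : ℂ) * (x : ℂ))).im with hu
  have hmem : ∀ t ∈ Icc (0:ℝ) 1, ((t : ℂ) * (x : ℂ)) ∈ Metric.ball (0:ℂ) (1/2) := by
    intro t ht
    simp only [Metric.mem_ball, dist_zero_right, norm_mul,
      Complex.norm_real, Real.norm_eq_abs]
    calc |t| * |x| ≤ 1 * |x| := by
          apply mul_le_mul_of_nonneg_right _ (abs_nonneg x)
          rw [abs_le]; constructor <;> linarith [ht.1, ht.2]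
      _ < 1/2 := by linarith
  have hderiv : ∀ t ∈ Icc (0:ℝ) 1,
      HasDerivAt u (((1 + f ((t:ℂ)*(x:ℂ)) ^ 2) * (x:ℂ)).im) t := by
    intro t ht
    have h1 : HasDerivAt (fun w : ℂ => f (w * (x:ℂ)))
        ((1 + f ((t:ℂ)*(x:ℂ)) ^ 2) * (x:ℂ)) ((t:ℂ)) := by
      have hin : HasDerivAt (fun w : ℂ => w * (x:ℂ)) ((x:ℂ)) ((t:ℂ)) := by
        simpa using (hasDerivAt_id ((t:ℂ))).mul_const ((x:ℂ))
      have h1' : HasDerivAt (f ∘ fun w : ℂ => w * (x:ℂ))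
          ((1 + f ((t:ℂ)*(x:ℂ)) ^ 2) * (x:ℂ)) ((t:ℂ)) :=
        HasDerivAt.comp _ (hf _ (hmem t ht)) hin
      exact h1'
    exact im_hasDerivAt' h1.comp_ofReal
  have hcont : ContinuousOn u (Icc 0 1) :=
    fun t ht => ((hderiv t ht).continuousAt).continuousWithinAt
  have hbound : ∀ t ∈ Ico (0:ℝ) 1,
      ‖((1 + f ((t:ℂ)*(x:ℂ)) ^ 2) * (x:ℂ)).im‖ ≤ 1 * ‖u t‖ + 0 := by
    intro t ht
    have ht' : t ∈ Icc (0:ℝ) 1 := ⟨ht.1, ht.2.le⟩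
    set c := f ((t:ℂ)*(x:ℂ)) with hc
    have habs : ‖c‖ ≤ 2 * |x| := by
      calc ‖c‖ ≤ 2 * ‖(t:ℂ)*(x:ℂ)‖ := hb _ (hmem t ht')
        _ = 2 * (|t| * |x|) := by simp [Complex.norm_real]
        _ ≤ 2 * (1 * |x|) := by
            apply mul_le_mul_of_nonneg_left _ (by norm_num)
            apply mul_le_mul_of_nonneg_right _ (abs_nonneg x)
            rw [abs_le]; constructor <;> linarith [ht.1, ht.2]
        _ = 2 * |x| := by ring
    have him : ((1 + c ^ 2) * (x:ℂ)).im = 2 * c.re * c.im * x := by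
      rw [Complex.mul_im, Complex.add_im, Complex.one_im, sq, Complex.mul_im,
        Complex.ofReal_re, Complex.ofReal_im]
      ring
    rw [him]
    have h1 : |2 * c.re * c.im * x| ≤ 2 * (2*|x|) * |c.im| * |x| := by
      have he : |2 * c.re * c.im * x| = 2 * |c.re| * |c.im| * |x| := by
        rw [abs_mul, abs_mul, abs_mul]; norm_num
      rw [he]
      have h2 : |c.re| ≤ 2 * |x| := le_trans (Complex.abs_re_le_norm c) habs
      gcongr
    calc ‖2 * c.re * c.im * x‖ ≤ 2 * (2*|x|) * |c.im| * |x| := h1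
      _ = (4 * |x|^2) * |c.im| := by ring
      _ ≤ 1 * |c.im| := by
          apply mul_le_mul_of_nonneg_right _ (abs_nonneg _)
          nlinarith [abs_nonneg x]
      _ = 1 * ‖u t‖ + 0 := by simp [hu, hc]
  have h0' : ‖u 0‖ ≤ 0 := by simp [hu, h0]
  have hle := norm_le_gronwallBound_of_norm_deriv_right_le hcont
    (fun t ht => (hderiv t ⟨ht.1, ht.2.le⟩).hasDerivWithinAt) h0' hbound 1
    (by norm_num : (1:ℝ) ∈ Icc (0:ℝ) 1)
  have hg : gronwallBound 0 1 0 (1 - 0) = 0 := by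
    simp [gronwallBound]
  rw [hg] at hle
  have hu1 : u 1 = 0 := norm_le_zero_iff.mp hle
  simpa [hu] using hu1

/-- With the bound `|f z| ≤ 2|z|`: for `z = x + iy` in the disc,
`|Im (f z) - y| ≤ 4 (x^2 + y^2) |y|`; hence `f z` real only if `z` is real. -/
theorem stmt_5 (f : ℂ → ℂ) (h0 : f 0 = 0)
    (hf : ∀ z ∈ Metric.ball (0 : ℂ) (1/2), HasDerivAt f (1 + f z ^ 2) z)
    (hb : ∀ z ∈ Metric.ball (0 : ℂ) (1/2), ‖f z‖ ≤ 2 * ‖z‖) :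
    ∀ z ∈ Metric.ball (0 : ℂ) (1/2),
      |(f z).im - z.im| ≤ 4 * (z.re ^ 2 + z.im ^ 2) * |z.im| ∧
      ((f z).im = 0 → z.im = 0) := by
  intro z hz
  set x := z.re with hxd
  set y := z.im with hyd
  have hzabs : ‖z‖ < 1/2 := by
    simpa [Complex.dist_eq] using hz
  have hsq : x^2 + y^2 < 1/4 := by
    have := Complex.sq_norm z
    rw [Complex.normSq_apply] at this
    nlinarith [norm_nonneg z]
  have hxlt : |x| < 1/2 := lt_of_le_of_lt (Complex.abs_re_le_norm z) hzabs
  -- membership of the vertical segment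
  have hmem : ∀ s ∈ uIcc (0:ℝ) y, ((x:ℂ) + (s:ℂ)*I) ∈ Metric.ball (0:ℂ) (1/2) := by
    intro s hs
    have hsy : |s| ≤ |y| := by
      rcases le_total 0 y with h | h
      · rw [uIcc_of_le h] at hs; rw [abs_le]
        constructor <;> [linarith [hs.1, abs_nonneg y]; skip]
        calc s ≤ y := hs.2
          _ ≤ |y| := le_abs_self y
      · rw [uIcc_of_ge h] at hs; rw [abs_le]
        constructor
        · calc -|y| = y := by rw [abs_of_nonpos h]; ring
            _ ≤ s := hs.1
        · linarith [hs.2, abs_nonneg y]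
    have habs2 : ‖(x:ℂ) + (s:ℂ)*I‖^2 = x^2 + s^2 := by
      rw [Complex.sq_norm, Complex.normSq_apply]
      simp
      ring
    simp only [Metric.mem_ball, dist_zero_right]
    have : ‖(x:ℂ) + (s:ℂ)*I‖^2 < (1/2)^2 := by
      rw [habs2]
      have : s^2 ≤ y^2 := by nlinarith [_root_.sq_abs s, _root_.sq_abs y, hsy, abs_nonneg s, abs_nonneg y]
      nlinarith
    exact lt_of_pow_lt_pow_left₀ 2 (by norm_num) this
  -- derivative of φ s = Im f(x+si) - s
  set φ : ℝ → ℝ := fun s => (f ((x:ℂ) + (s:ℂ)*I)).im - s with hφ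
  have hderiv : ∀ s ∈ uIcc (0:ℝ) y,
      HasDerivAt φ ((f ((x:ℂ) + (s:ℂ)*I) ^ 2).re) s := by
    intro s hs
    have h1 : HasDerivAt (fun w : ℂ => f ((x:ℂ) + w*I))
        ((1 + f ((x:ℂ) + (s:ℂ)*I) ^ 2) * I) ((s:ℂ)) := by
      have hin : HasDerivAt (fun w : ℂ => (x:ℂ) + w*I) I ((s:ℂ)) := by
        simpa using ((hasDerivAt_id ((s:ℂ))).mul_const I).const_add ((x:ℂ))
      have h1' : HasDerivAt (f ∘ fun w : ℂ => (x:ℂ) + w*I)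
          ((1 + f ((x:ℂ) + (s:ℂ)*I) ^ 2) * I) ((s:ℂ)) :=
        HasDerivAt.comp _ (hf _ (hmem s hs)) hin
      exact h1'
    have h2 := im_hasDerivAt' h1.comp_ofReal
    have h3 : HasDerivAt φ (((1 + f ((x:ℂ) + (s:ℂ)*I) ^ 2) * I).im - 1) s :=
      h2.sub (hasDerivAt_id s)
    have h4 : ((1 + f ((x:ℂ) + (s:ℂ)*I) ^ 2) * I).im - 1
        = (f ((x:ℂ) + (s:ℂ)*I) ^ 2).re := by
      simp [Complex.mul_im, Complex.add_re, Complex.add_im]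
    rwa [h4] at h3
  have hbound : ∀ s ∈ uIcc (0:ℝ) y,
      ‖(f ((x:ℂ) + (s:ℂ)*I) ^ 2).re‖ ≤ 4 * (x^2 + y^2) := by
    intro s hs
    set w := (x:ℂ) + (s:ℂ)*I with hw
    have hsy : |s| ≤ |y| := by
      rcases le_total 0 y with h | h
      · rw [uIcc_of_le h] at hs; rw [abs_le]
        exact ⟨by linarith [hs.1, abs_nonneg y], le_trans hs.2 (le_abs_self y)⟩
      · rw [uIcc_of_ge h] at hs; rw [abs_le]
        refine ⟨?_, by linarith [hs.2, abs_nonneg y]⟩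
        calc -|y| = y := by rw [abs_of_nonpos h]; ring
          _ ≤ s := hs.1
    have habs2 : ‖w‖^2 = x^2 + s^2 := by
      rw [Complex.sq_norm, Complex.normSq_apply]
      simp [hw]
      ring
    have hfw : ‖f w‖ ≤ 2 * ‖w‖ := hb _ (hmem s hs)
    have h1 : |(f w ^ 2).re| ≤ ‖f w‖^2 := by
      calc |(f w ^ 2).re| ≤ ‖f w ^ 2‖ := Complex.abs_re_le_norm _
        _ = ‖f w‖^2 := by rw [norm_pow]
    calc ‖(f w ^ 2).re‖ ≤ ‖f w‖^2 := h1
      _ ≤ (2 * ‖w‖)^2 := by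
          apply pow_le_pow_left₀ (norm_nonneg _) hfw
      _ = 4 * (x^2 + s^2) := by rw [mul_pow]; rw [habs2]; ring
      _ ≤ 4 * (x^2 + y^2) := by
          have : s^2 ≤ y^2 := by nlinarith [_root_.sq_abs s, _root_.sq_abs y, hsy, abs_nonneg s, abs_nonneg y]
          linarith
  have key := Convex.norm_image_sub_le_of_norm_hasDerivWithin_le
    (f := φ) (f' := fun s => (f ((x:ℂ) + (s:ℂ)*I) ^ 2).re)
    (fun s hs => (hderiv s hs).hasDerivWithinAt) hbound (convex_uIcc 0 y)
    (left_mem_uIcc) (right_mem_uIcc)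
  have hφ0 : φ 0 = 0 := by
    have : ((x:ℂ) + (0:ℝ)*I) = (x:ℂ) := by simp
    simp only [hφ, this, sub_zero]
    exact real_axis f h0 hf hb x hxlt
  have hφy : φ y = (f z).im - y := by
    simp only [hφ]
    congr 2
    · congr 1
      exact Complex.re_add_im z
  rw [hφ0, sub_zero, hφy] at key
  simp only [Real.norm_eq_abs, sub_zero] at key
  constructor
  · exact key
  · intro him
    rw [him] at key
    by_contra hy
    have h1 : |(0:ℝ) - y| = |y| := by rw [zero_sub, abs_neg]
    rw [h1] at key
    have h2 : 0 < |y| := abs_pos.mpr hy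
    nlinarith
end

section
/- Let f be holomorphic on the open disc E = B_{p}(0) (p = π/2) with f(0) = 0 and f' = 1 + f^2. Then for all a, z in the disc B_{p/2}(0), one has f(a)f(z) ≠ 1 and f(a + z) = (f(a) + f(z)) / (1 - f(a) f(z)). -/
open Complex Real Set

lemma cos_ne_zero_of_norm_lt {z : ℂ} (hz : ‖z‖ < Real.pi / 2) : Complex.cos z ≠ 0 := by
  intro h
  rw [Complex.cos_eq_zero_iff] at h
  obtain ⟨k, hk⟩ := h
  have hcast : ((2 * (k : ℂ) + 1) * (Real.pi : ℂ) / 2) = (((2 * (k : ℝ) + 1) * Real.pi / 2 : ℝ) : ℂ) := by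
    push_cast; ring
  have hnorm : ‖z‖ = |2 * (k : ℝ) + 1| * (Real.pi / 2) := by
    rw [hk, hcast, Complex.norm_real, Real.norm_eq_abs, abs_div, abs_mul,
      _root_.abs_of_pos Real.pi_pos, _root_.abs_two]
    ring
  have h2 : (1 : ℤ) ≤ |2 * k + 1| := Int.one_le_abs (by omega)
  have h1 : (1 : ℝ) ≤ |2 * (k : ℝ) + 1| := by exact_mod_cast h2
  nlinarith [Real.pi_pos]

set_option maxHeartbeats 1000000 in
/-- If `g' = F · g` on a ball around `0` with `g 0 = 0` and `F` continuous, then `g = 0`. -/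
lemma zero_of_linear_ode (g F : ℂ → ℂ) (r : ℝ)
    (hg : ∀ z ∈ Metric.ball (0 : ℂ) r, HasDerivAt g (F z * g z) z)
    (hFc : ContinuousOn F (Metric.ball (0 : ℂ) r))
    (hg0 : g 0 = 0) :
    ∀ w ∈ Metric.ball (0 : ℂ) r, g w = 0 := by
  intro w hw
  rw [Metric.mem_ball, dist_zero_right] at hw
  have hmem : ∀ t ∈ Icc (0 : ℝ) 1, ((t : ℂ) * w) ∈ Metric.ball (0 : ℂ) r := by
    intro t ht
    rw [Metric.mem_ball, dist_zero_right, norm_mul, Complex.norm_real, Real.norm_eq_abs,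
      _root_.abs_of_nonneg ht.1]
    calc t * ‖w‖ ≤ 1 * ‖w‖ := mul_le_mul_of_nonneg_right ht.2 (norm_nonneg w)
      _ < r := by rwa [one_mul]
  have hγ : ∀ t ∈ Icc (0 : ℝ) 1,
      HasDerivAt (fun s : ℝ => g ((s : ℂ) * w)) (F ((t : ℂ) * w) * g ((t : ℂ) * w) * w) t := by
    intro t ht
    have hG : HasDerivAt (fun u : ℂ => g (u * w)) (F ((t : ℂ) * w) * g ((t : ℂ) * w) * w) (t : ℂ) := by
      have := HasDerivAt.comp (t : ℂ) (hg ((t : ℂ) * w) (hmem t ht)) ((hasDerivAt_id (t : ℂ)).mul_const w)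
      simp only [one_mul] at this
      exact this
    exact hG.comp_ofReal
  have hfc : ContinuousOn (fun t : ℝ => F ((t : ℂ) * w)) (Icc 0 1) := by
    apply hFc.comp ((Complex.continuous_ofReal.mul continuous_const).continuousOn)
    intro t ht
    exact hmem t ht
  obtain ⟨C, hC⟩ := (isCompact_Icc (a := (0 : ℝ)) (b := 1)).exists_bound_of_continuousOn hfc
  have hbound : ∀ t ∈ Ico (0 : ℝ) 1,
      ‖F ((t : ℂ) * w) * g ((t : ℂ) * w) * w‖
        ≤ (max C 0 * ‖w‖) * ‖g ((t : ℂ) * w)‖ + 0 := by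
    intro t ht
    have hCt := hC t (Ico_subset_Icc_self ht)
    rw [norm_mul, norm_mul, add_zero]
    have hle : ‖F ((t : ℂ) * w)‖ ≤ max C 0 := le_trans hCt (le_max_left _ _)
    calc ‖F ((t : ℂ) * w)‖ * ‖g ((t : ℂ) * w)‖ * ‖w‖
        ≤ max C 0 * ‖g ((t : ℂ) * w)‖ * ‖w‖ := by
          apply mul_le_mul_of_nonneg_right _ (norm_nonneg w)
          exact mul_le_mul_of_nonneg_right hle (norm_nonneg _)
      _ = (max C 0 * ‖w‖) * ‖g ((t : ℂ) * w)‖ := by ring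
  have hγ0 : ‖g (((0 : ℝ) : ℂ) * w)‖ ≤ 0 := by simp [hg0]
  have hγcont : ContinuousOn (fun t : ℝ => g ((t : ℂ) * w)) (Icc 0 1) := fun t ht =>
    (hγ t ht).continuousAt.continuousWithinAt
  have key := norm_le_gronwallBound_of_norm_deriv_right_le hγcont
    (fun t ht => (hγ t (Ico_subset_Icc_self ht)).hasDerivWithinAt) hγ0 hbound
    1 (by norm_num)
  rw [gronwallBound_ε0_δ0] at key
  have hone : g (((1 : ℝ) : ℂ) * w) = 0 := norm_le_zero_iff.mp key
  simpa using hone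

lemma eq_tan_on_ball (f : ℂ → ℂ) (h0 : f 0 = 0)
    (hf : ∀ z ∈ Metric.ball (0 : ℂ) (Real.pi / 2), HasDerivAt f (1 + f z ^ 2) z) :
    ∀ w ∈ Metric.ball (0 : ℂ) (Real.pi / 2), f w = Complex.tan w := by
  have hg : ∀ z ∈ Metric.ball (0 : ℂ) (Real.pi / 2),
      HasDerivAt (fun z => f z * Complex.cos z - Complex.sin z)
        (f z * (f z * Complex.cos z - Complex.sin z)) z := by
    intro z hz
    have h := ((hf z hz).mul (Complex.hasDerivAt_cos z)).sub (Complex.hasDerivAt_sin z)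
    exact h.congr_deriv (by ring)
  have hFc : ContinuousOn f (Metric.ball (0 : ℂ) (Real.pi / 2)) := fun z hz =>
    (hf z hz).continuousAt.continuousWithinAt
  have hzero := zero_of_linear_ode (fun z => f z * Complex.cos z - Complex.sin z) f
    (Real.pi / 2) hg hFc (by simp [h0])
  intro w hw
  have hgw : f w * Complex.cos w - Complex.sin w = 0 := hzero w hw
  rw [Metric.mem_ball, dist_zero_right] at hw
  have hcos : Complex.cos w ≠ 0 := cos_ne_zero_of_norm_lt hw
  rw [Complex.tan_eq_sin_div_cos]
  field_simp
  linear_combination hgw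

/-- Addition theorem: if `f` solves `f' = 1 + f^2`, `f 0 = 0` on the disc `B_{π/2}(0)`,
then for `a, z` in `B_{π/4}(0)`, `f a * f z ≠ 1` and
`f (a + z) = (f a + f z) / (1 - f a * f z)`. -/
theorem stmt_10 (f : ℂ → ℂ) (h0 : f 0 = 0)
    (hf : ∀ z ∈ Metric.ball (0 : ℂ) (Real.pi / 2), HasDerivAt f (1 + f z ^ 2) z) :
    ∀ a ∈ Metric.ball (0 : ℂ) (Real.pi / 4), ∀ z ∈ Metric.ball (0 : ℂ) (Real.pi / 4),
      f a * f z ≠ 1 ∧ f (a + z) = (f a + f z) / (1 - f a * f z) := by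
  intro a ha z hz
  rw [Metric.mem_ball, dist_zero_right] at ha hz
  have hpi : Real.pi / 4 < Real.pi / 2 := by
    have := Real.pi_pos; linarith
  have ha' : a ∈ Metric.ball (0 : ℂ) (Real.pi / 2) := by
    rw [Metric.mem_ball, dist_zero_right]; linarith
  have hz' : z ∈ Metric.ball (0 : ℂ) (Real.pi / 2) := by
    rw [Metric.mem_ball, dist_zero_right]; linarith
  have haz' : a + z ∈ Metric.ball (0 : ℂ) (Real.pi / 2) := by
    rw [Metric.mem_ball, dist_zero_right]
    calc ‖a + z‖ ≤ ‖a‖ + ‖z‖ := norm_add_le a z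
      _ < Real.pi / 2 := by linarith
  have hfa := eq_tan_on_ball f h0 hf a ha'
  have hfz := eq_tan_on_ball f h0 hf z hz'
  have hfaz := eq_tan_on_ball f h0 hf (a + z) haz'
  have hca : Complex.cos a ≠ 0 := cos_ne_zero_of_norm_lt (by linarith)
  have hcz : Complex.cos z ≠ 0 := cos_ne_zero_of_norm_lt (by linarith)
  have hcaz : Complex.cos (a + z) ≠ 0 := by
    apply cos_ne_zero_of_norm_lt
    calc ‖a + z‖ ≤ ‖a‖ + ‖z‖ := norm_add_le a z
      _ < Real.pi / 2 := by linarith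
  rw [hfa, hfz, hfaz]
  have hcosadd : Complex.cos (a + z) = Complex.cos a * Complex.cos z - Complex.sin a * Complex.sin z :=
    Complex.cos_add a z
  have hne : Complex.tan a * Complex.tan z ≠ 1 := by
    intro h
    rw [Complex.tan_eq_sin_div_cos, Complex.tan_eq_sin_div_cos] at h
    field_simp at h
    apply hcaz
    rw [hcosadd, h]
    ring
  refine ⟨hne, ?_⟩
  rw [Complex.tan_eq_sin_div_cos, Complex.tan_eq_sin_div_cos, Complex.tan_eq_sin_div_cos]
  have h1 : (1 : ℂ) - Complex.sin a / Complex.cos a * (Complex.sin z / Complex.cos z) ≠ 0 := by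
    rw [← Complex.tan_eq_sin_div_cos, ← Complex.tan_eq_sin_div_cos, sub_ne_zero]
    exact fun h => hne h.symm
  rw [Complex.sin_add, hcosadd]
  field_simp
end
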